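/- Let F be a finite group acting ℚ-linearly on a finite-dimensional ℚ-vector space V, let V = W₁ ⊕ ⋯ ⊕ W_ℓ be a direct-sum decomposition into F-invariant subspaces such that for all i ≠ j the only F-equivariant ℚ-linear map W_i → W_j is zero, and let Λ ⊆ V be a finitely generated additive subgroup spanning V over ℚ with g(Λ) = Λ for all g ∈ F. Define C = {f ∈ GL(V) | f is F-equivariant and f(Λ) = Λ} and C' = {f ∈ GL(V) | f is F-equivariant and, for every i, f(W_i) = W_i and f(Λ ∩ W_i) = Λ ∩ W_i}. Then C is a subgroup of C' of finite index. -/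

import Mathlib

open scoped Pointwise DirectSum

set_option linter.unusedSectionVars false
set_option maxHeartbeats 1000000

section aux
variable {V : Type*} [AddCommGroup V] [Module ℚ V]

lemma aux_exists_nsmul_mem (A : AddSubgroup V) {v : V}
    (hv : v ∈ Submodule.span ℚ (A : Set V)) : ∃ n : ℕ, 0 < n ∧ n • v ∈ A := by
  induction hv using Submodule.span_induction with
  | mem x hx => exact ⟨1, one_pos, by simpa using hx⟩
  | zero => exact ⟨1, one_pos, by simpa using A.zero_mem⟩
  | add x y _ _ hx hy =>
    obtain ⟨m, hm, hmx⟩ := hx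
    obtain ⟨k, hk, hky⟩ := hy
    refine ⟨m * k, Nat.mul_pos hm hk, ?_⟩
    rw [smul_add]
    exact AddSubgroup.add_mem _ (by rw [mul_comm, mul_smul]; exact AddSubgroup.nsmul_mem _ hmx k)
      (by rw [mul_smul]; exact AddSubgroup.nsmul_mem _ hky m)
  | smul q x _ hx =>
    obtain ⟨m, hm, hmx⟩ := hx
    refine ⟨q.den * m, Nat.mul_pos q.pos hm, ?_⟩
    have hq : q * (q.den : ℚ) = (q.num : ℚ) := by
      nth_rewrite 1 [← Rat.num_div_den q]
      rw [div_mul_cancel₀]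
      exact_mod_cast q.den_nz
    have : ((q.den * m : ℕ)) • (q • x) = (q.num * (m:ℤ)) • x := by
      rw [← Nat.cast_smul_eq_nsmul ℚ, smul_smul, ← Int.cast_smul_eq_zsmul ℚ]
      congr 1
      push_cast
      rw [mul_comm ((q.den:ℚ)) (m:ℚ), mul_assoc, mul_comm ((q.den:ℚ)) q, hq]
      ring
    rw [this, mul_smul]
    exact AddSubgroup.zsmul_mem _ (by exact_mod_cast hmx) q.num

lemma aux_fg_map {G H : Type*} [AddGroup G] [AddGroup H] (A : AddSubgroup G) (φ : G →+ H)
    (hA : A.FG) : (A.map φ).FG := by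
  rw [AddSubgroup.fg_iff] at hA ⊢
  obtain ⟨S, hS, hfin⟩ := hA
  exact ⟨φ '' S, by rw [← AddMonoidHom.map_closure, hS], hfin.image φ⟩

lemma aux_fg_of_le {A B : AddSubgroup V} (hAB : A ≤ B) (hB : B.FG) : A.FG := by
  have h1 : AddGroup.FG ↥B := (AddGroup.fg_iff_addSubgroup_fg B).mpr hB
  have h2 : Module.Finite ℤ ↥B := Module.Finite.iff_addGroup_fg.mpr h1
  have h3 : IsNoetherian ℤ ↥B := inferInstance
  have h4 : (AddSubgroup.toIntSubmodule (A.addSubgroupOf B)).FG := IsNoetherian.noetherian _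
  have h5 : (A.addSubgroupOf B).FG := by
    have h4' : Module.Finite ℤ ↥(AddSubgroup.toIntSubmodule (A.addSubgroupOf B)) :=
      Module.Finite.iff_fg.mpr h4
    have : AddGroup.FG ↥(A.addSubgroupOf B) := Module.Finite.iff_addGroup_fg.mp h4'
    exact (AddGroup.fg_iff_addSubgroup_fg _).mp this
  have h6 := aux_fg_map _ B.subtype h5
  rwa [AddSubgroup.addSubgroupOf_map_subtype, inf_eq_left.mpr hAB] at h6

lemma aux_finite_interval {V' : Type*} [AddCommGroup V'] (A B : AddSubgroup V') (hAB : A ≤ B)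
    (hB : B.FG) (n : ℕ) (hn : 0 < n) (hnB : ∀ b ∈ B, n • b ∈ A) :
    {X : AddSubgroup V' | A ≤ X ∧ X ≤ B}.Finite := by
  have h1 : AddGroup.FG ↥B := (AddGroup.fg_iff_addSubgroup_fg B).mpr hB
  set N := A.addSubgroupOf B with hN
  have hfinQ : Finite (↥B ⧸ N) := by
    have hfg : AddGroup.FG (↥B ⧸ N) := inferInstance
    refine AddCommGroup.finite_of_fg_torsion _ ?_
    intro x
    obtain ⟨b, rfl⟩ := QuotientAddGroup.mk'_surjective N x
    rw [isOfFinAddOrder_iff_nsmul_eq_zero]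
    refine ⟨n, hn, ?_⟩
    rw [← map_nsmul, QuotientAddGroup.mk'_apply, QuotientAddGroup.eq_zero_iff]
    have hco : ((n • b : ↥B) : V') = n • (b : V') := rfl
    rw [hN, AddSubgroup.mem_addSubgroupOf, hco]
    exact hnB _ b.2
  have key : Set.InjOn (fun X : AddSubgroup V' =>
      (QuotientAddGroup.mk' N) '' {b : ↥B | (b : V') ∈ X})
      {X : AddSubgroup V' | A ≤ X ∧ X ≤ B} := by
    intro X hX Y hY hXY
    have main : ∀ (X' Y' : AddSubgroup V'), A ≤ X' → X' ≤ B → A ≤ Y' →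
        ((QuotientAddGroup.mk' N) '' {b : ↥B | (b : V') ∈ X'} ⊆
          (QuotientAddGroup.mk' N) '' {b : ↥B | (b : V') ∈ Y'}) → X' ≤ Y' := by
      intro X' Y' hAX' hX'B hAY' hsub x hx
      have hxB : x ∈ B := hX'B hx
      obtain ⟨b, hb, hbeq⟩ := hsub ⟨⟨x, hxB⟩, hx, rfl⟩
      rw [QuotientAddGroup.mk'_apply, QuotientAddGroup.mk'_apply,
        QuotientAddGroup.eq] at hbeq
      have : ((-b + ⟨x, hxB⟩ : ↥B) : V') ∈ A := hbeq
      have h2 : (-(b:V') + x) ∈ Y' := hAY' this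
      have := Y'.add_mem hb h2
      simpa using this
    simp only at hXY
    exact le_antisymm (main X Y hX.1 hX.2 hY.1 hXY.subset)
      (main Y X hY.1 hY.2 hX.1 hXY.symm.subset)
  have : Finite (Set (↥B ⧸ N)) := inferInstance
  exact Set.Finite.of_finite_image (Set.toFinite _) key

end aux

noncomputable def auxE {V : Type*} [AddCommGroup V] [Module ℚ V] {ℓ : ℕ}
    {W : Fin ℓ → Submodule ℚ V} (hinternal : DirectSum.IsInternal W) :
    (⨁ i, ↥(W i)) ≃ₗ[ℚ] V :=
  LinearEquiv.ofBijective (DirectSum.coeLinearMap W) hinternal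

section proj
variable {V : Type*} [AddCommGroup V] [Module ℚ V] {ℓ : ℕ} {W : Fin ℓ → Submodule ℚ V}
  (hinternal : DirectSum.IsInternal W)

lemma aux_sum_proj (v : V) : ∑ k, ((auxE hinternal).symm v k : V) = v := by
  conv_rhs => rw [← (auxE hinternal).apply_symm_apply v]
  generalize (auxE hinternal).symm v = x
  rw [← DirectSum.sum_univ_of x]
  show _ = auxE hinternal _
  rw [map_sum]
  refine Finset.sum_congr rfl fun k _ => ?_
  show _ = DirectSum.coeLinearMap W _
  rw [DirectSum.coeLinearMap_of]
  congr 1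
  rw [DirectSum.sum_univ_of x]

lemma aux_proj_piece (c : Fin ℓ → V) (hc : ∀ k, c k ∈ W k) (j : Fin ℓ) :
    ((auxE hinternal).symm (∑ k, c k) j : V) = c j := by
  rw [map_sum]
  rw [DFinsupp.finset_sum_apply]
  have : ∀ k, (((auxE hinternal).symm (c k)) j : V)
      = if k = j then c k else 0 := by
    intro k
    unfold auxE
    by_cases hkj : k = j
    · subst hkj
      rw [hinternal.ofBijective_coeLinearMap_of_mem (hc k)]
      simp
    · rw [hinternal.ofBijective_coeLinearMap_of_mem_ne hkj (hc k)]
      simp [hkj]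
  calc ((∑ k, ((auxE hinternal).symm (c k)) j : ↥(W j)) : V)
      = ∑ k, (((auxE hinternal).symm (c k)) j : V) := by push_cast; rfl
    _ = ∑ k, if k = j then c k else 0 := Finset.sum_congr rfl fun k _ => this k
    _ = c j := by rw [Finset.sum_ite_eq']; simp

variable {F : Type*} [Group F]

lemma aux_proj_equivariant (ρ : F →* (V ≃ₗ[ℚ] V))
    (hWinv : ∀ (g : F) (i : Fin ℓ), ∀ v ∈ W i, ρ g v ∈ W i) (g : F) (v : V) (j : Fin ℓ) :
    ((auxE hinternal).symm (ρ g v) j : V) = ρ g ((auxE hinternal).symm v j : V) := by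
  conv_lhs => rw [← aux_sum_proj hinternal v, map_sum]
  exact aux_proj_piece hinternal _ (fun k => hWinv g k _ (((auxE hinternal).symm v) k).2) j

include hinternal in
/-- centralizer elements preserve each `W i` -/
lemma aux_pres (ρ : F →* (V ≃ₗ[ℚ] V))
    (hWinv : ∀ (g : F) (i : Fin ℓ), ∀ v ∈ W i, ρ g v ∈ W i)
    (hhom : ∀ i j : Fin ℓ, i ≠ j → ∀ f : ↥(W i) →ₗ[ℚ] ↥(W j),
      (∀ (g : F) (v : ↥(W i)), (f ⟨ρ g ↑v, hWinv g i ↑v v.2⟩ : V) = ρ g ↑(f v)) → f = 0)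
    (f : V ≃ₗ[ℚ] V) (hfc : f ∈ Subgroup.centralizer (Set.range fun g => ρ g))
    (i : Fin ℓ) (v : V) (hv : v ∈ W i) : f v ∈ W i := by
  have hcomm : ∀ g w, f (ρ g w) = ρ g (f w) := fun g w =>
    (congrArg (fun e : V ≃ₗ[ℚ] V => e w) (hfc (ρ g) ⟨g, rfl⟩)).symm
  have hzero : ∀ j, j ≠ i → ((auxE hinternal).symm (f v) j : V) = 0 := by
    intro j hji
    let φ : ↥(W i) →ₗ[ℚ] ↥(W j) :=
      (DFinsupp.lapply j) ∘ₗ ((auxE hinternal).symm : V →ₗ[ℚ] ⨁ k, ↥(W k)) ∘ₗ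
        (f : V →ₗ[ℚ] V) ∘ₗ (W i).subtype
    have hφ : φ = 0 := by
      refine hhom i j (Ne.symm hji) φ ?_
      intro g w
      show ((auxE hinternal).symm (f (ρ g ↑w)) j : V) = ρ g ((auxE hinternal).symm (f ↑w) j : V)
      rw [hcomm g ↑w, aux_proj_equivariant hinternal ρ hWinv]
    have : ((auxE hinternal).symm (f ↑(⟨v, hv⟩ : ↥(W i))) j : V) = (φ ⟨v, hv⟩ : V) := rfl
    rw [hφ] at this
    simpa using this
  have := aux_sum_proj hinternal (f v)
  rw [Finset.sum_eq_single i (fun j _ hji => hzero j hji) (by simp)] at this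
  rw [← this]
  exact (((auxE hinternal).symm (f v)) i).2

end proj

/-- Let a finite group `F` act `ℚ`-linearly (via `ρ`) on a
finite-dimensional `ℚ`-vector space `V`, let `V = W₁ ⊕ ⋯ ⊕ W_ℓ` be a decomposition into
`F`-invariant subspaces such that for `i ≠ j` the only `F`-equivariant `ℚ`-linear map
`W_i → W_j` is zero, and let `Λ ⊆ V` be an `F`-invariant lattice.  Then
`C = {f ∈ GL(V) | f F-equivariant, f(Λ) = Λ}` is a subgroup of finite index in
`C' = {f ∈ GL(V) | f F-equivariant, f(W_i) = W_i and f(Λ ∩ W_i) = Λ ∩ W_i for all i}`. -/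
theorem stmt13 {V : Type*} [AddCommGroup V] [Module ℚ V] [FiniteDimensional ℚ V]
    {F : Type*} [Group F] [Finite F] (ρ : F →* (V ≃ₗ[ℚ] V))
    (ℓ : ℕ) (W : Fin ℓ → Submodule ℚ V)
    (hinternal : DirectSum.IsInternal W)
    (hWinv : ∀ (g : F) (i : Fin ℓ), ∀ v ∈ W i, ρ g v ∈ W i)
    (hhom : ∀ i j : Fin ℓ, i ≠ j → ∀ f : ↥(W i) →ₗ[ℚ] ↥(W j),
      (∀ (g : F) (v : ↥(W i)), (f ⟨ρ g ↑v, hWinv g i ↑v v.2⟩ : V) = ρ g ↑(f v)) → f = 0)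
    (Λ : AddSubgroup V) (hfg : Λ.FG)
    (hspan : Submodule.span ℚ (Λ : Set V) = ⊤)
    (hΛinv : ∀ g : F, ∀ v : V, v ∈ Λ ↔ ρ g v ∈ Λ) :
    (Subgroup.centralizer (Set.range fun g => ρ g) ⊓
        MulAction.stabilizer (V ≃ₗ[ℚ] V) (Λ : Set V)) ≤
      (Subgroup.centralizer (Set.range fun g => ρ g) ⊓
        ⨅ i : Fin ℓ, (MulAction.stabilizer (V ≃ₗ[ℚ] V) (W i : Set V) ⊓
          MulAction.stabilizer (V ≃ₗ[ℚ] V) ((Λ : Set V) ∩ (W i : Set V)))) ∧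
    (Subgroup.centralizer (Set.range fun g => ρ g) ⊓
        MulAction.stabilizer (V ≃ₗ[ℚ] V) (Λ : Set V)).relIndex
      (Subgroup.centralizer (Set.range fun g => ρ g) ⊓
        ⨅ i : Fin ℓ, (MulAction.stabilizer (V ≃ₗ[ℚ] V) (W i : Set V) ⊓
          MulAction.stabilizer (V ≃ₗ[ℚ] V) ((Λ : Set V) ∩ (W i : Set V)))) ≠ 0 := by
  classical
  set C : Subgroup (V ≃ₗ[ℚ] V) := Subgroup.centralizer (Set.range fun g => ρ g) ⊓
    MulAction.stabilizer (V ≃ₗ[ℚ] V) (Λ : Set V) with hC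
  set C' : Subgroup (V ≃ₗ[ℚ] V) := Subgroup.centralizer (Set.range fun g => ρ g) ⊓
    ⨅ i : Fin ℓ, (MulAction.stabilizer (V ≃ₗ[ℚ] V) (W i : Set V) ⊓
      MulAction.stabilizer (V ≃ₗ[ℚ] V) ((Λ : Set V) ∩ (W i : Set V))) with hC'
  -- membership in a set-stabilizer gives pointwise iff
  have hstab_iff : ∀ (f : V ≃ₗ[ℚ] V) (S : Set V), f ∈ MulAction.stabilizer (V ≃ₗ[ℚ] V) S →
      ∀ x, x ∈ S ↔ f⁻¹ x ∈ S := by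
    intro f S hf x
    rw [MulAction.mem_stabilizer_iff] at hf
    conv_lhs => rw [← hf]
    rw [Set.mem_smul_set_iff_inv_smul_mem]
    rfl
  -- Part 1
  have part1 : C ≤ C' := by
    intro f hf
    rw [hC, Subgroup.mem_inf] at hf
    obtain ⟨hfc, hfΛ⟩ := hf
    have hfinv : f⁻¹ ∈ Subgroup.centralizer (Set.range fun g => ρ g) := inv_mem hfc
    have hp := aux_pres hinternal ρ hWinv hhom f hfc
    have hp' := aux_pres hinternal ρ hWinv hhom f⁻¹ hfinv
    have hΛiff := hstab_iff f _ hfΛ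
    rw [hC', Subgroup.mem_inf]
    refine ⟨hfc, Subgroup.mem_iInf.mpr fun i => Subgroup.mem_inf.mpr ⟨?_, ?_⟩⟩
    · rw [MulAction.mem_stabilizer_iff]
      ext x
      rw [Set.mem_smul_set_iff_inv_smul_mem]
      show f⁻¹ x ∈ (W i : Set V) ↔ x ∈ (W i : Set V)
      constructor
      · intro h
        have h4 := hp i _ h
        rwa [show f (f⁻¹ x) = x from f.apply_symm_apply x] at h4
      · intro h
        exact hp' i x h
    · rw [MulAction.mem_stabilizer_iff]
      ext x
      rw [Set.mem_smul_set_iff_inv_smul_mem]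
      show f⁻¹ x ∈ (Λ : Set V) ∩ (W i : Set V) ↔ x ∈ (Λ : Set V) ∩ (W i : Set V)
      constructor
      · rintro ⟨h1, h2⟩
        have h4 := hp i _ h2
        rw [show f (f⁻¹ x) = x from f.apply_symm_apply x] at h4
        exact ⟨(hΛiff x).mpr h1, h4⟩
      · rintro ⟨h1, h2⟩
        exact ⟨(hΛiff x).mp h1, hp' i x h2⟩
  refine ⟨part1, ?_⟩
  -- Part 2: setup of lattices
  set Λi : Fin ℓ → AddSubgroup V := fun i => Λ ⊓ (W i).toAddSubgroup with hΛi
  set Λ' : AddSubgroup V := ⨆ i, Λi i with hΛ'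
  have hΛ'leΛ : Λ' ≤ Λ := iSup_le fun i => inf_le_left
  -- the projections as additive maps
  set πhom : Fin ℓ → (V →+ V) := fun i =>
    ((W i).subtype ∘ₗ (DFinsupp.lapply i) ∘ₗ
      ((auxE hinternal).symm : V →ₗ[ℚ] ⨁ k, ↥(W k))).toAddMonoidHom with hπ
  have hπapp : ∀ i v, πhom i v = ((auxE hinternal).symm v i : V) := fun i v => rfl
  have hπsum : ∀ v, ∑ i, πhom i v = v := fun v => aux_sum_proj hinternal v
  have hπmem : ∀ i v, πhom i v ∈ W i := fun i v => ((auxE hinternal).symm v i).2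
  -- choose denominators
  have hex : ∀ v : V, ∃ n : ℕ, 0 < n ∧ n • v ∈ Λ := fun v =>
    aux_exists_nsmul_mem Λ (by rw [hspan]; trivial)
  choose nf hnfpos hnfmem using hex
  have hΛfg : Λ.FG := hfg
  obtain ⟨S, hSgen⟩ := hfg
  set n : ℕ := ∏ s ∈ S, ∏ i, nf (πhom i s) with hn
  have hnpos : 0 < n := Finset.prod_pos fun s _ => Finset.prod_pos fun i _ => hnfpos _
  -- key : n • (πhom i b) ∈ Λi i for all b ∈ Λ
  have hkey : ∀ b ∈ Λ, ∀ i, n • (πhom i b) ∈ Λi i := by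
    have hle : Λ ≤ ⨅ i, AddSubgroup.comap
        ((zsmulAddGroupHom (n:ℤ)).comp (πhom i)) (Λi i) := by
      rw [← hSgen, AddSubgroup.closure_le]
      intro s hs
      simp only [SetLike.mem_coe, AddSubgroup.mem_iInf, AddSubgroup.mem_comap]
      intro i
      show (n:ℤ) • (πhom i s) ∈ Λi i
      have hd1 : nf (πhom i s) ∣ ∏ j, nf (πhom j s) :=
        Finset.dvd_prod_of_mem (fun j => nf (πhom j s)) (Finset.mem_univ i)
      have hd2 : (∏ j, nf (πhom j s)) ∣ n :=
        Finset.dvd_prod_of_mem (fun t => ∏ j, nf (πhom j t)) (Finset.mem_coe.mp hs)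
      obtain ⟨k, hk⟩ := hd1.trans hd2
      refine AddSubgroup.mem_inf.mpr ⟨?_, ?_⟩
      · have hns : (n:ℤ) • (πhom i s) = k • (nf (πhom i s) • (πhom i s)) := by
          rw [natCast_zsmul, ← mul_smul, hk, mul_comm]
        rw [hns]
        exact AddSubgroup.nsmul_mem _ (hnfmem _) k
      · show (n:ℤ) • (πhom i s) ∈ (W i).toAddSubgroup
        exact AddSubgroup.zsmul_mem _ ((Submodule.mem_toAddSubgroup _).mpr (hπmem i s)) _
    intro b hb i
    have := AddSubgroup.mem_iInf.mp (hle hb) i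
    rw [AddSubgroup.mem_comap] at this
    have h2 : (zsmulAddGroupHom (n:ℤ)).comp (πhom i) b = n • (πhom i b) := by
      show (n:ℤ) • (πhom i b) = n • (πhom i b)
      exact natCast_zsmul _ _
    rwa [h2] at this
  have hnΛ : ∀ b ∈ Λ, n • b ∈ Λ' := by
    intro b hb
    have : n • b = ∑ i, n • (πhom i b) := by rw [← Finset.smul_sum, hπsum]
    rw [this]
    exact AddSubgroup.sum_mem _ fun i _ => (le_iSup Λi i : Λi i ≤ Λ') (hkey b hb i)
  -- Λ'' = (1/n) Λ'
  have hΛ'fg : Λ'.FG := aux_fg_of_le hΛ'leΛ hΛfg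
  have hnne : ((n:ℚ)) ≠ 0 := by exact_mod_cast hnpos.ne'
  set e : V ≃ₗ[ℚ] V := LinearEquiv.smulOfNeZero ℚ V (n:ℚ) hnne with he
  set Λ'' : AddSubgroup V := Λ'.map e.symm.toLinearMap.toAddMonoidHom with hΛ''
  have hΛ''mem : ∀ v : V, v ∈ Λ'' ↔ (n:ℚ) • v ∈ Λ' := by
    intro v
    rw [hΛ'', AddSubgroup.mem_map]
    constructor
    · rintro ⟨w, hw, rfl⟩
      have h1 : (n:ℚ) • (e.symm.toLinearMap.toAddMonoidHom w) = w := by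
        show (n:ℚ) • e.symm w = w
        conv_lhs => rw [show ((n:ℚ) • e.symm w) = e (e.symm w) from rfl]
        rw [e.apply_symm_apply]
      rwa [h1]
    · intro hv
      refine ⟨(n:ℚ) • v, hv, ?_⟩
      show e.symm ((n:ℚ) • v) = v
      have h1 : (n:ℚ) • v = e v := rfl
      rw [h1, e.symm_apply_apply]
  have hΛ''fg : Λ''.FG := aux_fg_map _ _ hΛ'fg
  have hΛ'le'' : Λ' ≤ Λ'' := fun v hv => (hΛ''mem v).mpr
    (by rw [Nat.cast_smul_eq_nsmul]; exact AddSubgroup.nsmul_mem _ hv n)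
  have hn'' : ∀ b ∈ Λ'', n • b ∈ Λ' := fun b hb => by
    rw [← Nat.cast_smul_eq_nsmul ℚ]; exact (hΛ''mem b).mp hb
  have hfin := aux_finite_interval Λ' Λ'' hΛ'le'' hΛ''fg n hnpos hn''
  -- C' preserves Λ'
  have hC'pres : ∀ f : V ≃ₗ[ℚ] V, f ∈ C' → ∀ v ∈ Λ', f v ∈ Λ' := by
    intro f hf
    rw [hC', Subgroup.mem_inf] at hf
    obtain ⟨hfc, hfi⟩ := hf
    rw [Subgroup.mem_iInf] at hfi
    have hco : Λ' ≤ AddSubgroup.comap f.toLinearMap.toAddMonoidHom Λ' := by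
      rw [hΛ']
      refine iSup_le fun i => ?_
      intro v hv
      obtain ⟨hv1, hv2⟩ := AddSubgroup.mem_inf.mp hv
      rw [AddSubgroup.mem_comap]
      have h2 := (Subgroup.mem_inf.mp (hfi i)).2
      rw [MulAction.mem_stabilizer_iff] at h2
      have h3 : f • v ∈ f • ((Λ : Set V) ∩ (W i : Set V)) :=
        Set.smul_mem_smul_set ⟨hv1, hv2⟩
      rw [h2] at h3
      exact le_iSup Λi i (AddSubgroup.mem_inf.mpr ⟨h3.1, h3.2⟩)
    exact fun v hv => hco hv
  -- identify C.subgroupOf C' with a point stabilizer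
  have hsub : C.subgroupOf C' = MulAction.stabilizer ↥C' (Λ : AddSubgroup V) := by
    ext σ
    rw [Subgroup.mem_subgroupOf, MulAction.mem_stabilizer_iff]
    constructor
    · intro h
      have h2 := (Subgroup.mem_inf.mp h).2
      rw [MulAction.mem_stabilizer_iff] at h2
      show (↑σ : V ≃ₗ[ℚ] V) • Λ = Λ
      apply SetLike.coe_injective
      rw [AddSubgroup.coe_pointwise_smul]
      exact h2
    · intro h
      have hcent : (↑σ : V ≃ₗ[ℚ] V) ∈ Subgroup.centralizer (Set.range fun g => ρ g) :=
        (Subgroup.mem_inf.mp σ.2).1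
      rw [hC]
      refine Subgroup.mem_inf.mpr ⟨hcent, ?_⟩
      rw [MulAction.mem_stabilizer_iff]
      have h3 : ((↑σ : V ≃ₗ[ℚ] V) • Λ : AddSubgroup V) = Λ := h
      show (↑σ : V ≃ₗ[ℚ] V) • (Λ : Set V) = Λ
      rw [← AddSubgroup.coe_pointwise_smul, h3]
  -- the orbit of Λ under C' lies in the finite interval
  have horb : MulAction.orbit ↥C' (Λ : AddSubgroup V) ⊆ {X | Λ' ≤ X ∧ X ≤ Λ''} := by
    rintro X ⟨σ, rfl⟩
    have hσ : (↑σ : V ≃ₗ[ℚ] V) ∈ C' := σ.2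
    have hσinv : (↑σ : V ≃ₗ[ℚ] V)⁻¹ ∈ C' := inv_mem hσ
    constructor
    · intro x hx
      show x ∈ (↑σ : V ≃ₗ[ℚ] V) • Λ
      rw [AddSubgroup.mem_pointwise_smul_iff_inv_smul_mem]
      exact hΛ'leΛ (hC'pres _ hσinv x hx)
    · intro x hx
      have hx' : (↑σ : V ≃ₗ[ℚ] V)⁻¹ • x ∈ Λ := by
        rw [← AddSubgroup.mem_pointwise_smul_iff_inv_smul_mem]
        exact hx
      show x ∈ Λ''
      rw [hΛ''mem, Nat.cast_smul_eq_nsmul]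
      have h1 : n • ((↑σ : V ≃ₗ[ℚ] V)⁻¹ • x) ∈ Λ' := hnΛ _ hx'
      have h2 := hC'pres _ hσ _ h1
      have h3 : (↑σ : V ≃ₗ[ℚ] V) (n • ((↑σ : V ≃ₗ[ℚ] V)⁻¹ • x)) = n • x := by
        rw [map_nsmul]
        congr 1
        show (↑σ : V ≃ₗ[ℚ] V) ((↑σ : V ≃ₗ[ℚ] V).symm x) = x
        exact (↑σ : V ≃ₗ[ℚ] V).apply_symm_apply x
      rwa [h3] at h2
  have horbfin : (MulAction.orbit ↥C' (Λ : AddSubgroup V)).Finite := hfin.subset horb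
  show (C.subgroupOf C').index ≠ 0
  rw [hsub, MulAction.index_stabilizer]
  intro hzero
  rw [Set.ncard_eq_zero horbfin] at hzero
  exact (Set.nonempty_iff_ne_empty.mp ⟨Λ, MulAction.mem_orbit_self Λ⟩) hzero
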